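/- If g : [0,1] → ℝ is continuous, A ⊆ [0,1], f(x) = ∫₀ˣ g(t) dt, and the restriction of g to any set B ⊆ [0,1] with upper box (Minkowski) dimension greater than α ∈ [0,1] is not monotone, then the restriction of f to any set A ⊆ [0,1] with upper box dimension greater than α is neither convex nor concave. -/

import Mathlib

open Set MeasureTheory Filter

/-- Number of `N`-adic grid intervals `[(j-1)/N^k, j/N^k]` meeting `A`. -/
noncomputable def gridCount (N k : ℕ) (A : Set ℝ) : ℕ :=
  {j : ℕ | 1 ≤ j ∧ j ≤ N ^ k ∧
    (A ∩ Set.Icc (((j : ℝ) - 1) / (N : ℝ) ^ k) ((j : ℝ) / (N : ℝ) ^ k)).Nonempty}.ncard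

/-- Upper box (Minkowski) dimension, via dyadic grid counts. -/
noncomputable def ubDim (A : Set ℝ) : ℝ :=
  Filter.limsup (fun k : ℕ => Real.log (gridCount 2 k A) / (k * Real.log 2)) Filter.atTop

/-- `f` restricted to `A` is convex: it agrees on `A` with a function convex on the convex hull. -/
def ConvexRestr (f : ℝ → ℝ) (A : Set ℝ) : Prop :=
  ∃ h : ℝ → ℝ, ConvexOn ℝ (convexHull ℝ A) h ∧ Set.EqOn f h A

/-- `f` restricted to `A` is concave. -/
def ConcaveRestr (f : ℝ → ℝ) (A : Set ℝ) : Prop :=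
  ∃ h : ℝ → ℝ, ConcaveOn ℝ (convexHull ℝ A) h ∧ Set.EqOn f h A

section Aux
open Topology
open scoped Classical in
lemma gridCount_eq_card (k : ℕ) (A : Set ℝ) :
    gridCount 2 k A = ((Finset.Icc 1 (2 ^ k)).filter (fun j : ℕ =>
      (A ∩ Set.Icc (((j : ℝ) - 1) / 2 ^ k) ((j : ℝ) / 2 ^ k)).Nonempty)).card := by
  rw [gridCount]
  have : {j : ℕ | 1 ≤ j ∧ j ≤ 2 ^ k ∧
      (A ∩ Set.Icc (((j : ℝ) - 1) / ((2:ℕ) : ℝ) ^ k) ((j : ℝ) / ((2:ℕ) : ℝ) ^ k)).Nonempty}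
      = ↑((Finset.Icc 1 (2 ^ k)).filter (fun j : ℕ =>
      (A ∩ Set.Icc (((j : ℝ) - 1) / 2 ^ k) ((j : ℝ) / 2 ^ k)).Nonempty)) := by
    ext j
    simp only [Finset.coe_filter, Finset.mem_Icc, Set.mem_setOf_eq, Nat.cast_ofNat]
    tauto
  rw [this, Set.ncard_coe_finset]

lemma exists_grid_index {z : ℝ} {k j₁ j₂ : ℕ} (h1 : 1 ≤ j₁)
    (h12 : j₁ ≤ j₂) (hz1 : ((j₁ : ℝ) - 1) / 2 ^ k ≤ z) (hz2 : z ≤ (j₂ : ℝ) / 2 ^ k) :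
    ∃ j : ℕ, j₁ ≤ j ∧ j ≤ j₂ ∧ z ∈ Set.Icc (((j : ℝ) - 1) / 2 ^ k) ((j : ℝ) / 2 ^ k) := by
  have hp : (0 : ℝ) < 2 ^ k := by positivity
  have hz0 : 0 ≤ z := le_trans (by
    apply div_nonneg _ hp.le
    have : (1 : ℝ) ≤ (j₁ : ℝ) := by exact_mod_cast h1
    linarith) hz1
  set n := ⌊z * 2 ^ k⌋₊ with hn
  have hnle : (n : ℝ) ≤ z * 2 ^ k := Nat.floor_le (by positivity)
  have hnlt : z * 2 ^ k < (n : ℝ) + 1 := Nat.lt_floor_add_one _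
  rcases le_or_gt (n + 1) j₁ with hc1 | hc1
  · refine ⟨j₁, le_rfl, h12, hz1, ?_⟩
    have : ((n : ℝ) + 1) ≤ (j₁ : ℝ) := by exact_mod_cast hc1
    rw [le_div_iff₀ hp]
    linarith
  · rcases le_or_gt j₂ n with hc2 | hc2
    · refine ⟨j₂, h12, le_rfl, ?_, hz2⟩
      have hj2n : (j₂ : ℝ) ≤ (n : ℝ) := by exact_mod_cast hc2
      rw [le_div_iff₀ hp] at hz2
      rw [div_le_iff₀ hp]
      linarith
    · refine ⟨n + 1, le_of_lt hc1, hc2, ?_, ?_⟩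
      · rw [div_le_iff₀ hp]
        push_cast
        linarith
      · rw [le_div_iff₀ hp]
        push_cast
        linarith

lemma card_le_three (t : Finset ℕ)
    (h : ∀ a ∈ t, ∀ b ∈ t, ∀ c ∈ t, ∀ d ∈ t, a < b → b < c → c < d → False) :
    t.card ≤ 3 := by
  by_contra hc
  push_neg at hc
  obtain ⟨s, hst, hcard⟩ := Finset.exists_subset_card_eq (hc : 4 ≤ t.card)
  have hmem : ∀ x ∈ s.sort (· ≤ ·), x ∈ t := fun x hx => hst ((Finset.mem_sort _).mp hx)
  have hsort := (Finset.sortedLT_sort s).pairwise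
  have hlen : (s.sort (· ≤ ·)).length = 4 := by rw [Finset.length_sort]; exact hcard
  rcases hl : s.sort (· ≤ ·) with _ | ⟨a, _ | ⟨b, _ | ⟨c, _ | ⟨d, _ | e⟩⟩⟩⟩ <;>
    rw [hl] at hlen <;> simp at hlen
  rw [hl] at hmem hsort
  simp only [List.pairwise_cons, List.mem_cons, List.not_mem_nil, or_false,
    List.Pairwise.nil, and_true] at hsort
  exact h a (hmem a (by simp)) b (hmem b (by simp)) c (hmem c (by simp)) d (hmem d (by simp))
    (hsort.1 b (by simp)) (hsort.2.1 c (by simp)) (hsort.2.2.1 d (by simp))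

lemma key (g f : ℝ → ℝ) (hg : ContinuousOn g (Set.Icc 0 1))
    (hf : ∀ x, f x = ∫ t in (0 : ℝ)..x, g t)
    (A : Set ℝ) (hA : A ⊆ Set.Icc 0 1) (hc : ConvexRestr f A) :
    ∃ B, B ⊆ Set.Icc (0 : ℝ) 1 ∧ MonotoneOn g B ∧
      ∀ k, gridCount 2 k A ≤ 3 * gridCount 2 k B + 3 := by
  classical
  obtain ⟨h, hconv, heq⟩ := hc
  have hfe : f = fun u => ∫ t in (0 : ℝ)..u, g t := funext hf
  have hIccA : ∀ {a : ℝ}, a ∈ A → a ∈ Set.Icc (0 : ℝ) 1 := fun ha => hA ha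
  -- continuity of f on [0,1]
  have hfc : ContinuousOn f (Set.Icc 0 1) := by
    rw [hfe]
    have h01 : Set.uIcc (0 : ℝ) 1 = Set.Icc 0 1 := Set.uIcc_of_le zero_le_one
    have := intervalIntegral.continuousOn_primitive_interval
      (a := (0:ℝ)) (b := (1:ℝ)) (μ := volume) (f := g) (by rw [h01]; exact hg.integrableOn_Icc)
    rwa [h01] at this
  -- derivative of f on (0,1)
  have hder : ∀ x ∈ Set.Ioo (0 : ℝ) 1, HasDerivAt f (g x) x := by
    intro x hx
    have hxc : ContinuousAt g x :=
      hg.continuousAt (Icc_mem_nhds hx.1 hx.2)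
    have hii : IntervalIntegrable g volume 0 x := by
      apply ContinuousOn.intervalIntegrable
      apply hg.mono
      rw [Set.uIcc_of_le hx.1.le]
      exact Set.Icc_subset_Icc le_rfl hx.2.le
    have hm : StronglyMeasurableAtFilter g (𝓝 x) volume :=
      ContinuousOn.stronglyMeasurableAtFilter isOpen_Ioo (hg.mono Set.Ioo_subset_Icc_self) x hx
    rw [hfe]
    exact (intervalIntegral.integral_hasStrictDerivAt_right hii hm hxc).hasDerivAt
  -- mean value theorem
  have hmvt : ∀ u ∈ A, ∀ v ∈ A, u < v →
      ∃ ξ ∈ Set.Ioo u v, g ξ = (f v - f u) / (v - u) := by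
    intro u hu v hv huv
    have h0u : (0 : ℝ) ≤ u := (hIccA hu).1
    have hv1 : v ≤ 1 := (hIccA hv).2
    exact exists_hasDerivAt_eq_slope f g huv (hfc.mono (Set.Icc_subset_Icc h0u hv1))
      (fun x hx => hder x ⟨lt_of_le_of_lt h0u hx.1, lt_of_lt_of_le hx.2 hv1⟩)
  -- slope comparison from convexity
  have hhull : A ⊆ convexHull ℝ A := subset_convexHull ℝ A
  have hflip : ∀ p q : ℝ, (h p - h q) / (p - q) = (h q - h p) / (q - p) := by
    intro p q
    rw [← neg_sub (h q) (h p), ← neg_sub q p, neg_div_neg_eq]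
  have hS : ∀ a ∈ A, ∀ b ∈ A, ∀ c ∈ A, ∀ d ∈ A, a < b → c < d → a ≤ c → b ≤ d →
      (f b - f a) / (b - a) ≤ (f d - f c) / (d - c) := by
    intro a ha b hb c hc d hd hab hcd hac hbd
    rw [heq ha, heq hb, heq hc, heq hd]
    have had : a < d := lt_of_lt_of_le hab hbd
    have h1 : (h b - h a) / (b - a) ≤ (h d - h a) / (d - a) :=
      hconv.secant_mono (hhull ha) (hhull hb) (hhull hd) (ne_of_gt hab) (ne_of_gt had) hbd
    have h2 : (h a - h d) / (a - d) ≤ (h c - h d) / (c - d) :=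
      hconv.secant_mono (hhull hd) (hhull ha) (hhull hc) (ne_of_lt had) (ne_of_lt hcd) hac
    rw [hflip a d, hflip c d] at h2
    linarith
  -- epsilon-delta continuity of g
  have hgc : ∀ x ∈ Set.Icc (0 : ℝ) 1, ∀ ε > 0, ∃ δ > 0,
      ∀ y ∈ Set.Icc (0 : ℝ) 1, |y - x| < δ → |g y - g x| < ε := by
    intro x hx ε hε
    have hcw := hg x hx
    rw [Metric.continuousWithinAt_iff] at hcw
    obtain ⟨δ, hδ, hδ'⟩ := hcw ε hε
    refine ⟨δ, hδ, fun y hy hyd => ?_⟩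
    have := hδ' hy (by rwa [Real.dist_eq])
    rwa [Real.dist_eq] at this
  -- accumulation points are in [0,1]
  have hCIcc : ∀ x, AccPt x (𝓟 A) → x ∈ Set.Icc (0 : ℝ) 1 := fun x hx =>
    closure_minimal hA isClosed_Icc (mem_closure_iff_clusterPt.mpr (hx.clusterPt))
  -- pairs of points of A near an accumulation point
  have hPAIR : ∀ x, AccPt x (𝓟 A) → ∀ δ > 0, ∃ u ∈ A, ∃ v ∈ A,
      u < v ∧ u ≠ x ∧ v ≠ x ∧ |u - x| < δ ∧ |v - x| < δ := by
    intro x hx δ hδ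
    rw [accPt_iff_nhds] at hx
    obtain ⟨t, ⟨htb, htA⟩, htx⟩ := hx (Metric.ball x δ) (Metric.ball_mem_nhds x hδ)
    obtain ⟨t', ⟨ht'b, ht'A⟩, ht'x⟩ := hx (Metric.ball x (min δ (dist t x)))
      (Metric.ball_mem_nhds x (lt_min hδ (dist_pos.mpr htx)))
    have ht'd : dist t' x < δ := lt_of_lt_of_le (Metric.mem_ball.mp ht'b) (min_le_left _ _)
    have htt' : t' ≠ t := by
      intro e
      have := lt_of_lt_of_le (Metric.mem_ball.mp ht'b) (min_le_right _ _)
      rw [e] at this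
      exact lt_irrefl _ this
    have hall : ∀ w, w = t ∨ w = t' → w ∈ A ∧ w ≠ x ∧ |w - x| < δ := by
      rintro w (rfl | rfl)
      · exact ⟨htA, htx, by rw [← Real.dist_eq]; exact Metric.mem_ball.mp htb⟩
      · exact ⟨ht'A, ht'x, by rw [← Real.dist_eq]; exact ht'd⟩
    obtain ⟨h1, h2, h3⟩ := hall (min t t') (min_choice t t')
    obtain ⟨h4, h5, h6⟩ := hall (max t t') (max_choice t t')
    exact ⟨min t t', h1, max t t', h4, min_lt_max.mpr (Ne.symm htt'), h2, h5, h3, h6⟩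
  -- KEY2 : slope of a pair left of an accumulation point is ≤ g x
  have hK2 : ∀ x, AccPt x (𝓟 A) → ∀ a ∈ A, ∀ b ∈ A, a < b → b ≤ x →
      (f b - f a) / (b - a) ≤ g x := by
    intro x hx a ha b hb hab hbx
    have hx01 := hCIcc x hx
    refine le_of_forall_pos_le_add ?_
    intro ε hε
    obtain ⟨δ, hδ, hδg⟩ := hgc x hx01 ε hε
    rcases hbx.lt_or_eq with hblt | rfl
    · have hδ'pos : (0:ℝ) < min δ (x - b) := lt_min hδ (by linarith)
      obtain ⟨u, hu, v, hv, huv, hux, hvx, hud, hvd⟩ := hPAIR x hx _ hδ'pos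
      obtain ⟨ξ, hξ, hgξ⟩ := hmvt u hu v hv huv
      have hud' := abs_lt.mp hud
      have hvd' := abs_lt.mp hvd
      have hmin1 : min δ (x - b) ≤ δ := min_le_left _ _
      have hmin2 : min δ (x - b) ≤ x - b := min_le_right _ _
      have hbu : b ≤ u := by linarith
      have hbv : b ≤ v := by linarith
      have hsl := hS a ha b hb u hu v hv hab huv (le_trans hab.le hbu) hbv
      have hξ1 := hξ.1
      have hξ2 := hξ.2
      have hξd : |ξ - x| < δ := by rw [abs_lt]; constructor <;> linarith
      have hξ01 : ξ ∈ Set.Icc (0 : ℝ) 1 :=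
        ⟨le_trans (hIccA hu).1 hξ.1.le, le_trans hξ.2.le (hIccA hv).2⟩
      have hgg := abs_lt.mp (hδg ξ hξ01 hξd)
      rw [← hgξ] at hsl
      linarith
    · -- b = x, so x ∈ A
      have hδ'pos : (0:ℝ) < min δ (b - a) := lt_min hδ (by linarith)
      obtain ⟨u, hu, v, hv, huv, hux, hvx, hud, hvd⟩ := hPAIR b hx _ hδ'pos
      have hvd' := abs_lt.mp hvd
      have hmin1 : min δ (b - a) ≤ δ := min_le_left _ _
      have hmin2 : min δ (b - a) ≤ b - a := min_le_right _ _
      rcases lt_or_gt_of_ne hvx with hvb | hvb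
      · obtain ⟨ξ, hξ, hgξ⟩ := hmvt v hv b hb hvb
        have hav : a ≤ v := by linarith
        have hsl := hS a ha b hb v hv b hb hab hvb hav le_rfl
        have hξ1 := hξ.1
        have hξ2 := hξ.2
        have hξd : |ξ - b| < δ := by rw [abs_lt]; constructor <;> linarith
        have hξ01 : ξ ∈ Set.Icc (0 : ℝ) 1 :=
          ⟨le_trans (hIccA hv).1 hξ.1.le, le_trans hξ.2.le (hIccA hb).2⟩
        have hgg := abs_lt.mp (hδg ξ hξ01 hξd)
        rw [← hgξ] at hsl
        linarith
      · obtain ⟨ξ, hξ, hgξ⟩ := hmvt b hb v hv hvb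
        have hsl := hS a ha b hb b hb v hv hab hvb hab.le hvb.le
        have hξ1 := hξ.1
        have hξ2 := hξ.2
        have hξd : |ξ - b| < δ := by rw [abs_lt]; constructor <;> linarith
        have hξ01 : ξ ∈ Set.Icc (0 : ℝ) 1 :=
          ⟨le_trans (hIccA hb).1 hξ.1.le, le_trans hξ.2.le (hIccA hv).2⟩
        have hgg := abs_lt.mp (hδg ξ hξ01 hξd)
        rw [← hgξ] at hsl
        linarith
  -- KEY1 : g x ≤ slope of a pair right of an accumulation point
  have hK1 : ∀ x, AccPt x (𝓟 A) → ∀ c ∈ A, ∀ d ∈ A, c < d → x ≤ c →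
      g x ≤ (f d - f c) / (d - c) := by
    intro x hx c hcA d hd hcd hxc
    have hx01 := hCIcc x hx
    refine le_of_forall_pos_le_add ?_
    intro ε hε
    obtain ⟨δ, hδ, hδg⟩ := hgc x hx01 ε hε
    rcases hxc.lt_or_eq with hclt | rfl
    · have hδ'pos : (0:ℝ) < min δ (c - x) := lt_min hδ (by linarith)
      obtain ⟨u, hu, v, hv, huv, hux, hvx, hud, hvd⟩ := hPAIR x hx _ hδ'pos
      obtain ⟨ξ, hξ, hgξ⟩ := hmvt u hu v hv huv
      have hud' := abs_lt.mp hud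
      have hvd' := abs_lt.mp hvd
      have hmin1 : min δ (c - x) ≤ δ := min_le_left _ _
      have hmin2 : min δ (c - x) ≤ c - x := min_le_right _ _
      have huc : u ≤ c := by linarith
      have hvdle : v ≤ d := by linarith
      have hsl := hS u hu v hv c hcA d hd huv hcd huc hvdle
      have hξ1 := hξ.1
      have hξ2 := hξ.2
      have hξd : |ξ - x| < δ := by rw [abs_lt]; constructor <;> linarith
      have hξ01 : ξ ∈ Set.Icc (0 : ℝ) 1 :=
        ⟨le_trans (hIccA hu).1 hξ.1.le, le_trans hξ.2.le (hIccA hv).2⟩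
      have hgg := abs_lt.mp (hδg ξ hξ01 hξd)
      rw [← hgξ] at hsl
      linarith
    · -- x = c, so c ∈ A ; here hxc was x ≤ c with equality, rfl : x = c
      have hδ'pos : (0:ℝ) < min δ (d - x) := lt_min hδ (by linarith)
      obtain ⟨u, hu, v, hv, huv, hux, hvx, hud, hvd⟩ := hPAIR x hx _ hδ'pos
      have hud' := abs_lt.mp hud
      have hmin1 : min δ (d - x) ≤ δ := min_le_left _ _
      have hmin2 : min δ (d - x) ≤ d - x := min_le_right _ _
      rcases lt_or_gt_of_ne hux with hub | hub
      · obtain ⟨ξ, hξ, hgξ⟩ := hmvt u hu x hcA hub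
        have hsl := hS u hu x hcA x hcA d hd hub hcd hub.le hcd.le
        have hξ1 := hξ.1
        have hξ2 := hξ.2
        have hξd : |ξ - x| < δ := by rw [abs_lt]; constructor <;> linarith
        have hξ01 : ξ ∈ Set.Icc (0 : ℝ) 1 :=
          ⟨le_trans (hIccA hu).1 hξ.1.le, le_trans hξ.2.le (hIccA hcA).2⟩
        have hgg := abs_lt.mp (hδg ξ hξ01 hξd)
        rw [← hgξ] at hsl
        linarith
      · obtain ⟨ξ, hξ, hgξ⟩ := hmvt x hcA u hu hub
        have hule : u ≤ d := by linarith
        have hsl := hS x hcA u hu x hcA d hd hub hcd le_rfl hule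
        have hξ1 := hξ.1
        have hξ2 := hξ.2
        have hξd : |ξ - x| < δ := by rw [abs_lt]; constructor <;> linarith
        have hξ01 : ξ ∈ Set.Icc (0 : ℝ) 1 :=
          ⟨le_trans (hIccA hcA).1 hξ.1.le, le_trans hξ.2.le (hIccA hu).2⟩
        have hgg := abs_lt.mp (hδg ξ hξ01 hξd)
        rw [← hgξ] at hsl
        linarith
  -- KEY3 : g is monotone on accumulation points
  have hK3 : ∀ x y, AccPt x (𝓟 A) → AccPt y (𝓟 A) → x < y → g x ≤ g y := by
    intro x y hx hy hxy
    have hx01 := hCIcc x hx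
    refine le_of_forall_pos_le_add ?_
    intro ε hε
    obtain ⟨δ, hδ, hδg⟩ := hgc x hx01 ε hε
    have hδ'pos : (0:ℝ) < min δ (y - x) := lt_min hδ (by linarith)
    obtain ⟨u, hu, v, hv, huv, hux, hvx, hud, hvd⟩ := hPAIR x hx _ hδ'pos
    obtain ⟨ξ, hξ, hgξ⟩ := hmvt u hu v hv huv
    have hud' := abs_lt.mp hud
    have hvd' := abs_lt.mp hvd
    have hmin1 : min δ (y - x) ≤ δ := min_le_left _ _
    have hmin2 : min δ (y - x) ≤ y - x := min_le_right _ _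
    have hvy : v ≤ y := by linarith
    have hsl := hK2 y hy u hu v hv huv hvy
    have hξ1 := hξ.1
    have hξ2 := hξ.2
    have hξd : |ξ - x| < δ := by rw [abs_lt]; constructor <;> linarith
    have hξ01 : ξ ∈ Set.Icc (0 : ℝ) 1 :=
      ⟨le_trans (hIccA hu).1 hξ.1.le, le_trans hξ.2.le (hIccA hv).2⟩
    have hgg := abs_lt.mp (hδg ξ hξ01 hξd)
    rw [← hgξ] at hsl
    linarith
  -- the sets C (accumulation points) and D (MVT points of gaps)
  set C : Set ℝ := {x | AccPt x (𝓟 A)} with hCdef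
  set D : Set ℝ := {x | ∃ u ∈ A, ∃ v ∈ A, u < v ∧ Set.Ioo u v ∩ A = ∅ ∧
      x ∈ Set.Ioo u v ∧ g x = (f v - f u) / (v - u)} with hDdef
  have hDmem : ∀ {x u v : ℝ}, u ∈ A → v ∈ A → u < v → Set.Ioo u v ∩ A = ∅ →
      x ∈ Set.Ioo u v → g x = (f v - f u) / (v - u) → x ∈ D := by
    intro x u v hu hv huv hgap hx hgx
    exact ⟨u, hu, v, hv, huv, hgap, hx, hgx⟩
  -- accumulation points avoid gaps
  have hCgap : ∀ u v : ℝ, Set.Ioo u v ∩ A = ∅ → ∀ w, AccPt w (𝓟 A) → w ∉ Set.Ioo u v := by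
    intro u v hemp w hw hwin
    have hwc : w ∈ closure A := mem_closure_iff_clusterPt.mpr hw.clusterPt
    have hsub : closure A ⊆ (Set.Ioo u v)ᶜ :=
      closure_minimal (fun t ht hti => Set.eq_empty_iff_forall_notMem.mp hemp t ⟨hti, ht⟩)
        isOpen_Ioo.isClosed_compl
    exact hsub hwc hwin
  -- gap uniqueness
  have hA_not_gap : ∀ u v : ℝ, Set.Ioo u v ∩ A = ∅ → ∀ s ∈ A, s ∉ Set.Ioo u v := by
    intro u v hemp s hs hsi
    exact Set.eq_empty_iff_forall_notMem.mp hemp s ⟨hsi, hs⟩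
  have hgapu : ∀ u v c d : ℝ, u ∈ A → v ∈ A → c ∈ A → d ∈ A → u < v → c < d →
      Set.Ioo u v ∩ A = ∅ → Set.Ioo c d ∩ A = ∅ →
      (Set.Ioo u v ∩ Set.Ioo c d).Nonempty → u = c ∧ v = d := by
    rintro u v c d hu hv hcA hd huv hcd he1 he2 ⟨t, ht1, ht2⟩
    have huc : u = c := by
      by_contra hne'
      rcases lt_or_gt_of_ne hne' with h' | h'
      · exact hA_not_gap u v he1 c hcA ⟨h', lt_trans ht2.1 ht1.2⟩
      · exact hA_not_gap c d he2 u hu ⟨h', lt_trans ht1.1 ht2.2⟩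
    subst huc
    have hvd : v = d := by
      by_contra hne'
      rcases lt_or_gt_of_ne hne' with h' | h'
      · exact hA_not_gap u d he2 v hv ⟨huv, h'⟩
      · exact hA_not_gap u v he1 d hd ⟨hcd, h'⟩
    exact ⟨rfl, hvd⟩
  -- monotonicity of g on B = C ∪ D
  have hmono : MonotoneOn g (C ∪ D) := by
    intro x hx y hy hxy
    rcases hxy.lt_or_eq with hlt | rfl
    swap
    · exact le_rfl
    rcases hx with hxC | hxD
    · rcases hy with hyC | hyD
      · exact hK3 x y hxC hyC hlt
      · obtain ⟨c, hcA, d, hd, hcd, hgap, hyIoo, hgy⟩ := hyD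
        have hxn : x ∉ Set.Ioo c d := hCgap c d hgap x hxC
        have hxc : x ≤ c := by
          by_contra hxc
          push_neg at hxc
          exact hxn ⟨hxc, lt_trans hlt hyIoo.2⟩
        rw [hgy]
        exact hK1 x hxC c hcA d hd hcd hxc
    · obtain ⟨u, hu, v, hv, huv, hgap, hxIoo, hgx⟩ := hxD
      rcases hy with hyC | hyD
      · have hyn : y ∉ Set.Ioo u v := hCgap u v hgap y hyC
        have hvy : v ≤ y := by
          by_contra hvy
          push_neg at hvy
          exact hyn ⟨lt_trans hxIoo.1 hlt, hvy⟩
        rw [hgx]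
        exact hK2 y hyC u hu v hv huv hvy
      · obtain ⟨c, hcA, d, hd, hcd, hgap', hyIoo, hgy⟩ := hyD
        by_cases hsame : (Set.Ioo u v ∩ Set.Ioo c d).Nonempty
        · obtain ⟨rfl, rfl⟩ := hgapu u v c d hu hv hcA hd huv hcd hgap hgap' hsame
          rw [hgx, hgy]
        · have hvc : v ≤ c := by
            by_contra hvc
            push_neg at hvc
            apply hsame
            have hud : u < d := lt_trans hxIoo.1 (lt_trans hlt hyIoo.2)
            have e1 := le_max_left u c
            have e2 := le_max_right u c
            have e3 := min_le_left v d
            have e4 := min_le_right v d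
            have hmm : max u c < min v d := by
              rw [max_lt_iff, lt_min_iff, lt_min_iff]
              exact ⟨⟨huv, hud⟩, ⟨hvc, hcd⟩⟩
            refine ⟨(max u c + min v d) / 2, ⟨?_, ?_⟩, ⟨?_, ?_⟩⟩ <;> linarith
          rw [hgx, hgy]
          exact hS u hu v hv c hcA d hd huv hcd (le_trans huv.le hvc) (le_trans hvc hcd.le)
  -- B is inside [0,1]
  have hBIcc : C ∪ D ⊆ Set.Icc (0 : ℝ) 1 := by
    rintro x (hxC | hxD)
    · exact hCIcc x hxC
    · obtain ⟨u, hu, v, hv, huv, hgap, hxIoo, hgx⟩ := hxD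
      exact ⟨le_trans (hIccA hu).1 hxIoo.1.le, le_trans hxIoo.2.le (hIccA hv).2⟩
  -- between any two points of A there is a point of B
  have hZ : ∀ a ∈ A, ∀ a' ∈ A, a < a' → ∃ z ∈ C ∪ D, a ≤ z ∧ z ≤ a' := by
    intro a ha a' ha' haa'
    by_cases hinf : (A ∩ Set.Icc a a').Infinite
    · obtain ⟨w, hwK, hw⟩ := hinf.exists_accPt_of_subset_isCompact isCompact_Icc
        Set.inter_subset_right
      exact ⟨w, Or.inl (hw.mono (principal_mono.mpr Set.inter_subset_left)), hwK.1, hwK.2⟩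
    · have hfin : (A ∩ Set.Icc a a').Finite := Set.not_infinite.mp hinf
      have haT : a ∈ hfin.toFinset := hfin.mem_toFinset.mpr ⟨ha, le_rfl, haa'.le⟩
      have ha'T : a' ∈ hfin.toFinset := hfin.mem_toFinset.mpr ⟨ha', haa'.le, le_rfl⟩
      set t1 := hfin.toFinset.filter (fun t => t < a') with ht1def
      have ht1ne : t1.Nonempty := ⟨a, Finset.mem_filter.mpr ⟨haT, haa'⟩⟩
      set u := t1.max' ht1ne with hudef
      have huT := Finset.mem_filter.mp (t1.max'_mem ht1ne)
      have huA : u ∈ A := (hfin.mem_toFinset.mp huT.1).1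
      have hua' : u < a' := huT.2
      have hau : a ≤ u := t1.le_max' a (Finset.mem_filter.mpr ⟨haT, haa'⟩)
      set t2 := hfin.toFinset.filter (fun t => u < t) with ht2def
      have ht2ne : t2.Nonempty := ⟨a', Finset.mem_filter.mpr ⟨ha'T, hua'⟩⟩
      set v := t2.min' ht2ne with hvdef
      have hvT := Finset.mem_filter.mp (t2.min'_mem ht2ne)
      have hvA : v ∈ A := (hfin.mem_toFinset.mp hvT.1).1
      have huv : u < v := hvT.2
      have hva' : v ≤ a' := t2.min'_le a' (Finset.mem_filter.mpr ⟨ha'T, hua'⟩)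
      have hgapE : Set.Ioo u v ∩ A = ∅ := by
        rw [Set.eq_empty_iff_forall_notMem]
        rintro t ⟨htIoo, htA⟩
        have htIcc : t ∈ Set.Icc a a' :=
          ⟨le_trans hau htIoo.1.le, le_trans htIoo.2.le hva'⟩
        have : t ∈ t2 := Finset.mem_filter.mpr ⟨hfin.mem_toFinset.mpr ⟨htA, htIcc⟩, htIoo.1⟩
        exact absurd (t2.min'_le t this) (not_le.mpr htIoo.2)
      obtain ⟨ξ, hξ, hgξ⟩ := hmvt u huA v hvA huv
      exact ⟨ξ, Or.inr ⟨u, huA, v, hvA, huv, hgapE, hξ, hgξ⟩,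
        le_trans hau hξ.1.le, le_trans hξ.2.le hva'⟩
  -- the counting estimate
  have hcnt : ∀ k, gridCount 2 k A ≤ 3 * gridCount 2 k (C ∪ D) + 3 := by
    intro k
    rw [gridCount_eq_card k A, gridCount_eq_card k (C ∪ D)]
    set FA := ((Finset.Icc 1 (2 ^ k)).filter (fun j : ℕ =>
      (A ∩ Set.Icc (((j : ℝ) - 1) / 2 ^ k) ((j : ℝ) / 2 ^ k)).Nonempty)) with hFAdef
    set FB := ((Finset.Icc 1 (2 ^ k)).filter (fun j : ℕ =>
      ((C ∪ D) ∩ Set.Icc (((j : ℝ) - 1) / 2 ^ k) ((j : ℝ) / 2 ^ k)).Nonempty)) with hFBdef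
    have hp : (0 : ℝ) < 2 ^ k := by positivity
    have hP : ∀ j₁ j₂ : ℕ, j₁ ∈ FA → j₂ ∈ FA → j₁ + 2 ≤ j₂ →
        ∃ j ∈ FB, j₁ ≤ j ∧ j ≤ j₂ := by
      intro j₁ j₂ hj₁ hj₂ hlt
      rw [hFAdef, Finset.mem_filter, Finset.mem_Icc] at hj₁ hj₂
      obtain ⟨⟨hj₁1, hj₁2⟩, a, haA, ha1, ha2⟩ := hj₁
      obtain ⟨⟨hj₂1, hj₂2⟩, a', ha'A, ha'1, ha'2⟩ := hj₂
      have hj12 : (j₁ : ℝ) + 2 ≤ (j₂ : ℝ) := by exact_mod_cast hlt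
      have haa' : a < a' := by
        rw [le_div_iff₀ hp] at ha2
        rw [div_le_iff₀ hp] at ha'1
        have : a * 2 ^ k < a' * 2 ^ k := by linarith
        exact lt_of_mul_lt_mul_right this hp.le
      obtain ⟨z, hzB, hza, hza'⟩ := hZ a haA a' ha'A haa'
      obtain ⟨j, hjj₁, hjj₂, hzj⟩ := exists_grid_index hj₁1 (by omega)
        (le_trans ha1 hza) (le_trans hza' ha'2)
      refine ⟨j, ?_, hjj₁, hjj₂⟩
      rw [hFBdef, Finset.mem_filter, Finset.mem_Icc]
      exact ⟨⟨le_trans hj₁1 hjj₁, le_trans hjj₂ hj₂2⟩, z, hzB, hzj⟩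
    set σ : ℕ → ℕ := fun j => sInf {b : ℕ | b ∈ FB ∧ j ≤ b} with hσdef
    have hfib : ∀ s ∈ FA.image σ, (FA.filter (fun j => σ j = s)).card ≤ 3 := by
      intro s _
      apply card_le_three
      intro a ha b hb c hc d hd hab hbc hcd
      rw [Finset.mem_filter] at ha hb hc hd
      have hac : a + 2 ≤ c := by omega
      obtain ⟨e, heB, hea, hec⟩ := hP a c ha.1 hc.1 hac
      have h1a : 1 ≤ a := (Finset.mem_Icc.mp (Finset.mem_filter.mp ha.1).1).1
      have hne : {b : ℕ | b ∈ FB ∧ a ≤ b}.Nonempty := ⟨e, heB, hea⟩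
      have hsa : σ a ∈ {b : ℕ | b ∈ FB ∧ a ≤ b} := Nat.sInf_mem hne
      have hse : σ a ≤ e := Nat.sInf_le ⟨heB, hea⟩
      have hsd : d ≤ σ d := by
        rcases Set.eq_empty_or_nonempty {b : ℕ | b ∈ FB ∧ d ≤ b} with he1 | hne1
        · exfalso
          have hd0 : σ d = 0 := by rw [hσdef]; simp only [he1]; exact Nat.sInf_empty
          have := hsa.2
          omega
        · exact (Nat.sInf_mem hne1).2
      omega
    have h1 : FA.card ≤ 3 * (FA.image σ).card :=
      Finset.card_le_mul_card_image FA 3 hfib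
    have h2 : (FA.image σ).card ≤ FB.card + 1 := by
      have hsub : FA.image σ ⊆ insert 0 FB := by
        intro x hx
        obtain ⟨j, hj, rfl⟩ := Finset.mem_image.mp hx
        rcases Set.eq_empty_or_nonempty {b : ℕ | b ∈ FB ∧ j ≤ b} with he | hne
        · have : σ j = 0 := by rw [hσdef]; simp only [he]; exact Nat.sInf_empty
          rw [this]; exact Finset.mem_insert_self 0 FB
        · exact Finset.mem_insert_of_mem (Nat.sInf_mem hne).1
      exact le_trans (Finset.card_le_card hsub) (Finset.card_insert_le _ _)
    omega
  exact ⟨C ∪ D, hBIcc, hmono, hcnt⟩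

lemma dim_gt {α : ℝ} (hα0 : 0 ≤ α) (A B : Set ℝ)
    (hcnt : ∀ k, gridCount 2 k A ≤ 3 * gridCount 2 k B + 3)
    (hdim : ubDim A > α) : ubDim B > α := by
  classical
  have hl2 : (0 : ℝ) < Real.log 2 := Real.log_pos one_lt_two
  set u := fun k : ℕ => Real.log (gridCount 2 k A) / (k * Real.log 2) with hu
  set v := fun k : ℕ => Real.log (gridCount 2 k B) / (k * Real.log 2) with hv
  have hLA : ubDim A = Filter.limsup u Filter.atTop := rfl
  have hLB : ubDim B = Filter.limsup v Filter.atTop := rfl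
  have hub : ∀ (X : Set ℝ) (k : ℕ), gridCount 2 k X ≤ 2 ^ k := by
    intro X k
    rw [gridCount_eq_card]
    calc _ ≤ (Finset.Icc 1 (2 ^ k)).card := Finset.card_filter_le _ _
    _ = 2 ^ k := by simp
  have hv1 : ∀ k, v k ≤ 1 := by
    intro k
    rcases Nat.eq_zero_or_pos k with rfl | hk
    · simp [hv]
    · have hkpos : (0 : ℝ) < (k : ℝ) * Real.log 2 :=
        mul_pos (by exact_mod_cast hk) hl2
      rw [hv, div_le_one hkpos]
      have hle : Real.log (gridCount 2 k B) ≤ Real.log ((2 : ℝ) ^ k) := by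
        rcases Nat.eq_zero_or_pos (gridCount 2 k B) with h0 | hpos
        · rw [h0]
          simp only [Nat.cast_zero, Real.log_zero]
          apply Real.log_nonneg
          exact one_le_pow₀ one_le_two
        · apply Real.log_le_log (by exact_mod_cast hpos)
          exact_mod_cast hub B k
      rw [Real.log_pow] at hle
      linarith
  have hu0 : ∀ k, 0 ≤ u k := by
    intro k
    exact div_nonneg (Real.log_natCast_nonneg _) (by positivity)
  have hcob : Filter.IsCoboundedUnder (· ≤ ·) Filter.atTop u :=
    Filter.isCoboundedUnder_le_of_le Filter.atTop hu0
  set L := ubDim A with hLdef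
  set β := (α + L) / 2 with hβ
  set γ := (α + β) / 2 with hγ
  have hαβ : α < β := by rw [hβ]; linarith
  have hβL : β < L := by rw [hβ]; linarith
  have hαγ : α < γ := by rw [hγ]; linarith
  have hγβ : γ < β := by rw [hγ]; linarith
  have hfreq : ∃ᶠ k in Filter.atTop, β < u k := by
    apply Filter.frequently_lt_of_lt_limsup hcob
    rw [← hLA]; exact hβL
  have hdenom : Filter.Tendsto (fun k : ℕ => (k : ℝ) * Real.log 2) Filter.atTop Filter.atTop :=
    Filter.Tendsto.atTop_mul_const hl2 tendsto_natCast_atTop_atTop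
  have hten6 : Filter.Tendsto (fun k : ℕ => Real.log 6 / ((k : ℝ) * Real.log 2))
      Filter.atTop (𝓝 0) := Filter.Tendsto.div_atTop tendsto_const_nhds hdenom
  have hten3 : Filter.Tendsto (fun k : ℕ => Real.log 3 / ((k : ℝ) * Real.log 2))
      Filter.atTop (𝓝 0) := Filter.Tendsto.div_atTop tendsto_const_nhds hdenom
  have hev : ∀ᶠ k : ℕ in Filter.atTop, Real.log 6 / ((k : ℝ) * Real.log 2) < β - γ ∧
      Real.log 3 / ((k : ℝ) * Real.log 2) < β ∧ 1 ≤ k := by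
    have e6 := hten6.eventually_lt_const (show (0:ℝ) < β - γ by linarith)
    have e3 := hten3.eventually_lt_const (show (0:ℝ) < β by linarith)
    exact e6.and (e3.and (Filter.eventually_ge_atTop 1))
  have hfreq2 : ∃ᶠ k in Filter.atTop, γ ≤ v k := by
    refine (hfreq.and_eventually hev).mono ?_
    rintro k ⟨hku, h6, h3, hk1⟩
    have hkpos : (0 : ℝ) < (k : ℝ) * Real.log 2 :=
      mul_pos (by exact_mod_cast hk1) hl2
    have hlogA : β * ((k : ℝ) * Real.log 2) < Real.log (gridCount 2 k A) := by
      rw [hu] at hku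
      exact (lt_div_iff₀ hkpos).mp hku
    have hlog6 : Real.log 6 < (β - γ) * ((k : ℝ) * Real.log 2) := (div_lt_iff₀ hkpos).mp h6
    have hlog3 : Real.log 3 < β * ((k : ℝ) * Real.log 2) := (div_lt_iff₀ hkpos).mp h3
    have hcA1 : 1 ≤ gridCount 2 k A := by
      by_contra hc0
      have : gridCount 2 k A = 0 := by omega
      rw [this] at hlogA
      simp only [Nat.cast_zero, Real.log_zero] at hlogA
      nlinarith
    have hcA3 : (3 : ℝ) < (gridCount 2 k A : ℝ) := by
      rw [← Real.log_lt_log_iff (by norm_num) (by exact_mod_cast hcA1)]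
      linarith
    have hcA3' : 3 < gridCount 2 k A := by exact_mod_cast hcA3
    have hcB1 : 1 ≤ gridCount 2 k B := by
      have := hcnt k
      omega
    have hcAB : (gridCount 2 k A : ℝ) ≤ 6 * (gridCount 2 k B : ℝ) := by
      have h' : gridCount 2 k A ≤ 6 * gridCount 2 k B := by
        have := hcnt k
        omega
      exact_mod_cast h'
    have hlogAB : Real.log (gridCount 2 k A) ≤ Real.log 6 + Real.log (gridCount 2 k B) := by
      rw [← Real.log_mul (by norm_num) (by exact_mod_cast Nat.one_le_iff_ne_zero.mp hcB1)]
      exact Real.log_le_log (by exact_mod_cast hcA1) hcAB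
    rw [hv, le_div_iff₀ hkpos]
    nlinarith
  have hlim : γ ≤ Filter.limsup v Filter.atTop :=
    Filter.le_limsup_of_frequently_le hfreq2 (Filter.isBoundedUnder_of ⟨1, hv1⟩)
  rw [gt_iff_lt, hLB]
  linarith

end Aux

/-- If `g` is continuous on `[0,1]`, `f x = ∫₀ˣ g`, and `g` is not monotone on any
`B ⊆ [0,1]` of upper box dimension `> α ∈ [0,1]`, then `f` is neither convex nor
concave on any `A ⊆ [0,1]` of upper box dimension `> α`. -/
theorem stmt0 (α : ℝ) (hα : α ∈ Set.Icc (0 : ℝ) 1)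
    (g f : ℝ → ℝ) (hg : ContinuousOn g (Set.Icc 0 1))
    (hf : ∀ x, f x = ∫ t in (0 : ℝ)..x, g t)
    (hmono : ∀ B ⊆ Set.Icc (0 : ℝ) 1, ubDim B > α →
      ¬ MonotoneOn g B ∧ ¬ AntitoneOn g B) :
    ∀ A ⊆ Set.Icc (0 : ℝ) 1, ubDim A > α →
      ¬ ConvexRestr f A ∧ ¬ ConcaveRestr f A := by
  intro A hA hdim
  constructor
  · intro hc
    obtain ⟨B, hB1, hB2, hB3⟩ := key g f hg hf A hA hc
    exact (hmono B hB1 (dim_gt hα.1 A B hB3 hdim)).1 hB2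
  · intro hc
    obtain ⟨h, hconc, heq⟩ := hc
    have hc' : ConvexRestr (fun x => -f x) A :=
      ⟨-h, hconc.neg, fun x hx => by simp [heq hx]⟩
    have hg' : ContinuousOn (fun x => -g x) (Set.Icc 0 1) := hg.neg
    have hf' : ∀ x, (fun y => -f y) x = ∫ t in (0 : ℝ)..x, -g t := by
      intro x
      simp [hf x, intervalIntegral.integral_neg]
    obtain ⟨B, hB1, hB2, hB3⟩ := key (fun x => -g x) (fun x => -f x) hg' hf' A hA hc'
    have hanti : AntitoneOn g B := by
      intro x hx y hy hxy
      have := hB2 hx hy hxy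
      simp only [neg_le_neg_iff] at this
      linarith [this]
    exact (hmono B hB1 (dim_gt hα.1 A B hB3 hdim)).2 hanti
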